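/- Let F be a finite type, ∂F ⊆ F, and let Q be a real symmetric matrix indexed by F satisfying Q(i,j) ≤ 0 for all i ≠ j and Σⱼ Q(i,j) ≥ 0 for all i (i.e. Q is the matrix of a dissipative electrical network). Assume the block D = Q|_{(F∖∂F)×(F∖∂F)} is invertible. Then the Schur complement Q_{∂F} = A − B D⁻¹ Bᵀ satisfies the same properties: (Q_{∂F})(x,y) ≤ 0 for all x ≠ y in ∂F and Σ_y (Q_{∂F})(x,y) ≥ 0 for all x ∈ ∂F. (The trace map sends the cone 𝒟_F of Dirichlet forms on F to the cone 𝒟_{∂F} of Dirichlet forms on ∂F; moreover if all row sums of Q vanish then all row sums of Q_{∂F} vanish, i.e. conservative networks are mapped to conservative networks.) -/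

import Mathlib

open Matrix Filter Topology Finset NNReal

section Helpers

set_option linter.unusedSectionVars false

attribute [local instance] Matrix.linftyOpNormedRing Matrix.linftyOpNormedAlgebra

variable {n : Type*} [Fintype n] [DecidableEq n]

private def entryLM (i j : n) : Matrix n n ℝ →ₗ[ℝ] ℝ where
  toFun M := M i j
  map_add' _ _ := rfl
  map_smul' _ _ := rfl

private noncomputable def entryCLM (i j : n) : Matrix n n ℝ →L[ℝ] ℝ :=
  (entryLM i j).toContinuousLinearMap

@[simp] private lemma entryCLM_apply (i j : n) (M : Matrix n n ℝ) :
    entryCLM i j M = M i j := rfl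

private lemma pow_entry_nonneg {t : Matrix n n ℝ} (ht : ∀ i j, 0 ≤ t i j) (k : ℕ) :
    ∀ i j, 0 ≤ (t ^ k) i j := by
  induction k with
  | zero => intro i j; rw [pow_zero, Matrix.one_apply]; split <;> norm_num
  | succ k ih =>
    intro i j
    rw [pow_succ, Matrix.mul_apply]
    exact Finset.sum_nonneg fun l _ => mul_nonneg (ih i l) (ht l j)

private lemma norm_le_of_row_sums {M : Matrix n n ℝ} {r : ℝ} (hr : 0 ≤ r)
    (h : ∀ i, ∑ j, |M i j| ≤ r) : ‖M‖ ≤ r := by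
  rw [Matrix.linfty_opNorm_def]
  rw [show r = ((r.toNNReal : ℝ≥0) : ℝ) by simp [hr]]
  norm_cast
  apply Finset.sup_le
  intro i _
  rw [← NNReal.coe_le_coe]
  push_cast
  simpa [hr, Real.norm_eq_abs] using h i

private lemma key1 {E : Matrix n n ℝ} {δ : ℝ} (hδ : 0 < δ)
    (hoff : ∀ i j, i ≠ j → E i j ≤ 0) (hrow : ∀ i, δ ≤ ∑ j, E i j) :
    IsUnit E.det ∧ ∀ i j, 0 ≤ E⁻¹ i j := by
  set c : ℝ := δ + ∑ i, |E i i| with hc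
  have hcpos : 0 < c := by
    have : (0:ℝ) ≤ ∑ i, |E i i| := Finset.sum_nonneg fun i _ => abs_nonneg _
    linarith
  have hdiag : ∀ i, E i i ≤ c := by
    intro i
    have h1 : E i i ≤ |E i i| := le_abs_self _
    have h2 : |E i i| ≤ ∑ k, |E k k| :=
      Finset.single_le_sum (f := fun k => |E k k|) (fun k _ => abs_nonneg _) (Finset.mem_univ i)
    linarith
  set t : Matrix n n ℝ := c⁻¹ • (c • (1 : Matrix n n ℝ) - E) with htdef
  have ht : ∀ i j, 0 ≤ t i j := by
    intro i j
    have : 0 ≤ (c • (1 : Matrix n n ℝ) - E) i j := by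
      rcases eq_or_ne i j with rfl | hij
      · simp [Matrix.one_apply, sub_nonneg, hdiag i]
      · simpa [Matrix.one_apply, hij] using neg_nonneg.2 (hoff i j hij)
    simpa [htdef] using mul_nonneg (inv_nonneg.2 hcpos.le) this
  have hrowabs : ∀ i, ∑ j, |(c • (1 : Matrix n n ℝ) - E) i j| ≤ c - δ := by
    intro i
    have hsplit : ∑ j, |(c • (1 : Matrix n n ℝ) - E) i j|
        = |c - E i i| + ∑ j ∈ Finset.univ.erase i, |(0:ℝ) - E i j| := by
      rw [← Finset.add_sum_erase _ _ (Finset.mem_univ i)]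
      congr 1
      · simp [Matrix.one_apply]
      · exact Finset.sum_congr rfl fun j hj =>
          by simp [Matrix.one_apply, (Finset.ne_of_mem_erase hj).symm,
            Ne.symm (Finset.ne_of_mem_erase hj)]
    have habs : |c - E i i| = c - E i i := abs_of_nonneg (by linarith [hdiag i])
    have habs2 : ∀ j ∈ Finset.univ.erase i, |(0:ℝ) - E i j| = - E i j := by
      intro j hj
      rw [zero_sub, abs_of_nonneg (neg_nonneg.2 (hoff i j (Finset.ne_of_mem_erase hj).symm))]
    rw [hsplit, habs, Finset.sum_congr rfl habs2]
    have : E i i + ∑ j ∈ Finset.univ.erase i, E i j = ∑ j, E i j :=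
      Finset.add_sum_erase _ _ (Finset.mem_univ i)
    have h3 := hrow i
    have : ∑ j ∈ Finset.univ.erase i, - E i j = - ∑ j ∈ Finset.univ.erase i, E i j :=
      Finset.sum_neg_distrib _
    linarith
  have hsum0 : (0:ℝ) ≤ ∑ i, |E i i| := Finset.sum_nonneg fun i _ => abs_nonneg _
  have hnorm : ‖t‖ < 1 := by
    have h1 : ‖c • (1 : Matrix n n ℝ) - E‖ ≤ c - δ :=
      norm_le_of_row_sums (by rw [hc]; linarith) hrowabs
    have : ‖t‖ ≤ c⁻¹ * (c - δ) := by
      rw [htdef, norm_smul, Real.norm_eq_abs, abs_of_nonneg (inv_nonneg.2 hcpos.le)]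
      exact mul_le_mul_of_nonneg_left h1 (inv_nonneg.2 hcpos.le)
    have h2 : c⁻¹ * (c - δ) < 1 := by
      rw [inv_mul_lt_iff₀ hcpos, mul_one]
      linarith
    linarith
  have h1t : (1 : Matrix n n ℝ) - t = c⁻¹ • E := by
    rw [htdef, smul_sub, smul_smul, inv_mul_cancel₀ hcpos.ne', one_smul, sub_sub_cancel]
  set S : Matrix n n ℝ := ∑' k : ℕ, t ^ k with hSdef
  have hmul : (1 - t) * S = 1 := mul_neg_geom_series t hnorm
  have hE : E = c • ((1 : Matrix n n ℝ) - t) := by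
    rw [h1t, smul_smul, mul_inv_cancel₀ hcpos.ne', one_smul]
  have hright : E * (c⁻¹ • S) = 1 := by
    rw [hE, smul_mul_assoc, mul_smul_comm, hmul, smul_smul, mul_inv_cancel₀ hcpos.ne', one_smul]
  have hS : ∀ i j, 0 ≤ S i j := by
    intro i j
    have hsummable : Summable fun k : ℕ => t ^ k := summable_geometric_of_norm_lt_one hnorm
    have hmap : HasSum (fun k : ℕ => (t ^ k) i j) (S i j) := by
      simpa using hsummable.hasSum.mapL (entryCLM i j)
    exact hmap.nonneg fun k => pow_entry_nonneg ht k i j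
  refine ⟨Matrix.isUnit_det_of_right_inverse hright, ?_⟩
  intro i j
  rw [Matrix.inv_eq_right_inv hright]
  simpa using mul_nonneg (inv_nonneg.2 hcpos.le) (hS i j)

private lemma key2 {D : Matrix n n ℝ}
    (hoff : ∀ i j, i ≠ j → D i j ≤ 0) (hrow : ∀ i, 0 ≤ ∑ j, D i j)
    (hD : IsUnit D.det) : ∀ i j, 0 ≤ D⁻¹ i j := by
  intro i j
  obtain ⟨u, hu⟩ := (Matrix.isUnit_iff_isUnit_det D).2 hD
  have h1 : Tendsto (fun ε : ℝ => D + ε • (1 : Matrix n n ℝ)) (𝓝[>] 0) (𝓝 D) := by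
    have hcont : Continuous fun ε : ℝ => D + ε • (1 : Matrix n n ℝ) :=
      continuous_const.add (continuous_id.smul continuous_const)
    have := (hcont.tendsto 0).mono_left (nhdsWithin_le_nhds (s := Set.Ioi (0:ℝ)))
    simpa using this
  have h2 : Tendsto (fun ε : ℝ => Ring.inverse (D + ε • (1 : Matrix n n ℝ)))
      (𝓝[>] 0) (𝓝 (Ring.inverse D)) := by
    have := (NormedRing.inverse_continuousAt u).tendsto
    rw [hu] at this
    exact this.comp h1
  have h3 : Tendsto (fun ε : ℝ => (Ring.inverse (D + ε • (1 : Matrix n n ℝ))) i j)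
      (𝓝[>] 0) (𝓝 (D⁻¹ i j)) := by
    have := ((entryCLM i j).continuous.tendsto (Ring.inverse D)).comp h2
    rw [Matrix.nonsing_inv_eq_ringInverse]
    exact this
  refine ge_of_tendsto h3 ?_
  filter_upwards [self_mem_nhdsWithin] with ε (hε : 0 < ε)
  have hoff' : ∀ k l, k ≠ l → (D + ε • (1 : Matrix n n ℝ)) k l ≤ 0 := by
    intro k l hkl
    simpa [Matrix.one_apply, hkl] using hoff k l hkl
  have hrow' : ∀ k, ε ≤ ∑ l, (D + ε • (1 : Matrix n n ℝ)) k l := by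
    intro k
    have : ∑ l, (D + ε • (1 : Matrix n n ℝ)) k l = (∑ l, D k l) + ε := by
      simp [Finset.sum_add_distrib, Matrix.one_apply]
    rw [this]
    linarith [hrow k]
  obtain ⟨hdet, hinv⟩ := key1 hε hoff' hrow'
  rw [← Matrix.nonsing_inv_eq_ringInverse]
  exact hinv i j

end Helpers

/-- If `Q` is a real symmetric matrix with nonpositive off-diagonal entries and nonnegative row
sums (the matrix of a dissipative electrical network), and its interior block `D` is invertible,
then the Schur complement `Q_{∂F} = A − B D⁻¹ Bᵀ` has nonpositive off-diagonal entries and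
nonnegative row sums; moreover if all row sums of `Q` vanish then all row sums of `Q_{∂F}`
vanish. -/
theorem statement_17 {F : Type*} [Fintype F] [DecidableEq F]
    (s : Set F) [DecidablePred (· ∈ s)]
    (Q : Matrix F F ℝ) (hQsym : Q.IsSymm)
    (hoff : ∀ i j : F, i ≠ j → Q i j ≤ 0)
    (hrow : ∀ i : F, 0 ≤ ∑ j, Q i j)
    (A : Matrix {x // x ∈ s} {x // x ∈ s} ℝ)
    (hA : A = Q.submatrix Subtype.val Subtype.val)
    (B : Matrix {x // x ∈ s} {x // x ∉ s} ℝ)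
    (hB : B = Q.submatrix Subtype.val Subtype.val)
    (D : Matrix {x // x ∉ s} {x // x ∉ s} ℝ)
    (hD : D = Q.submatrix Subtype.val Subtype.val)
    (hDinv : IsUnit D.det) :
    (∀ x y : {x // x ∈ s}, x ≠ y → (A - B * D⁻¹ * Bᵀ) x y ≤ 0) ∧
      (∀ x : {x // x ∈ s}, 0 ≤ ∑ y, (A - B * D⁻¹ * Bᵀ) x y) ∧
      ((∀ i : F, ∑ j, Q i j = 0) →
        ∀ x : {x // x ∈ s}, ∑ y, (A - B * D⁻¹ * Bᵀ) x y = 0) := by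
  have hsym : ∀ i j : F, Q j i = Q i j := fun i j => hQsym.apply i j
  have hmem_ne : ∀ (x : {x // x ∈ s}) (k : {x // x ∉ s}), (x : F) ≠ (k : F) := by
    intro x k h
    exact k.2 (h ▸ x.2)
  have hBle : ∀ (x : {x // x ∈ s}) (k : {x // x ∉ s}), B x k ≤ 0 := by
    intro x k
    rw [hB]
    exact hoff _ _ (hmem_ne x k)
  have hoffD : ∀ k l : {x // x ∉ s}, k ≠ l → D k l ≤ 0 := by
    intro k l h
    rw [hD]
    exact hoff _ _ fun e => h (Subtype.ext e)
  have hrowD : ∀ k : {x // x ∉ s}, 0 ≤ ∑ l, D k l := by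
    intro k
    have hsplit := Fintype.sum_subtype_add_sum_subtype (· ∈ s) (fun j => Q ↑k j)
    have h1 : ∑ y : {x // x ∈ s}, Q ↑k ↑y ≤ 0 :=
      Finset.sum_nonpos fun y _ => hoff _ _ (Ne.symm (hmem_ne y k))
    have h2 := hrow (↑k : F)
    have h3 : ∑ l, D k l = ∑ l : {x // x ∉ s}, Q ↑k ↑l := by rw [hD]; rfl
    rw [h3]
    linarith
  have hDinvnn : ∀ k l, 0 ≤ D⁻¹ k l := key2 hoffD hrowD hDinv
  -- inner sums are nonpositive
  have hBD : ∀ (x : {x // x ∈ s}) (l : {x // x ∉ s}), (B * D⁻¹) x l ≤ 0 := by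
    intro x l
    rw [Matrix.mul_apply]
    exact Finset.sum_nonpos fun k _ =>
      mul_nonpos_of_nonpos_of_nonneg (hBle x k) (hDinvnn k l)
  -- entry formula
  have hentry : ∀ x y : {x // x ∈ s},
      (A - B * D⁻¹ * Bᵀ) x y = A x y - ∑ l, (B * D⁻¹) x l * B y l := by
    intro x y
    simp [Matrix.sub_apply, Matrix.mul_apply, Matrix.transpose_apply]
  -- row sum formula
  have hBcol : ∀ l : {x // x ∉ s}, ∑ y, B y l = (∑ j, Q ↑l j) - ∑ k, D l k := by
    intro l
    have hsplit := Fintype.sum_subtype_add_sum_subtype (· ∈ s) (fun j => Q ↑l j)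
    have h1 : ∑ y : {x // x ∈ s}, B y l = ∑ y : {x // x ∈ s}, Q ↑l ↑y := by
      rw [hB]
      exact Finset.sum_congr rfl fun y _ => hsym _ _
    have h2 : ∑ k, D l k = ∑ k : {x // x ∉ s}, Q ↑l ↑k := by rw [hD]; rfl
    rw [h1, h2]
    linarith
  have hBDD : ∀ x : {x // x ∈ s}, ∑ l, (B * D⁻¹) x l * (∑ k, D l k) = ∑ k, B x k := by
    intro x
    have h1 : (B * D⁻¹) * D = B := by
      rw [Matrix.mul_assoc, Matrix.nonsing_inv_mul D hDinv, Matrix.mul_one]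
    calc ∑ l, (B * D⁻¹) x l * (∑ k, D l k)
        = ∑ l, ∑ k, (B * D⁻¹) x l * D l k := by
          exact Finset.sum_congr rfl fun l _ => Finset.mul_sum _ _ _
      _ = ∑ k, ∑ l, (B * D⁻¹) x l * D l k := Finset.sum_comm
      _ = ∑ k, ((B * D⁻¹) * D) x k := by
          exact Finset.sum_congr rfl fun k _ => (Matrix.mul_apply).symm
      _ = ∑ k, B x k := by rw [h1]
  have hABrow : ∀ x : {x // x ∈ s}, ∑ y, A x y + ∑ k, B x k = ∑ j, Q ↑x j := by
    intro x
    have hsplit := Fintype.sum_subtype_add_sum_subtype (· ∈ s) (fun j => Q ↑x j)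
    have h1 : ∑ y, A x y = ∑ y : {x // x ∈ s}, Q ↑x ↑y := by rw [hA]; rfl
    have h2 : ∑ k, B x k = ∑ k : {x // x ∉ s}, Q ↑x ↑k := by rw [hB]; rfl
    rw [h1, h2]
    linarith
  have hrowformula : ∀ x : {x // x ∈ s},
      ∑ y, (A - B * D⁻¹ * Bᵀ) x y
        = (∑ j, Q ↑x j) - ∑ l, (B * D⁻¹) x l * (∑ j, Q ↑l j) := by
    intro x
    have e1 : ∑ y, (A - B * D⁻¹ * Bᵀ) x y
        = ∑ y, A x y - ∑ y, (B * D⁻¹ * Bᵀ) x y := by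
      simp [Matrix.sub_apply, Finset.sum_sub_distrib]
    have e2 : ∑ y, (B * D⁻¹ * Bᵀ) x y = ∑ l, (B * D⁻¹) x l * (∑ y, B y l) := by
      calc ∑ y, (B * D⁻¹ * Bᵀ) x y
          = ∑ y, ∑ l, (B * D⁻¹) x l * B y l := by
            exact Finset.sum_congr rfl fun y _ => by
              rw [Matrix.mul_apply]
              exact Finset.sum_congr rfl fun l _ => by rw [Matrix.transpose_apply]
        _ = ∑ l, ∑ y, (B * D⁻¹) x l * B y l := Finset.sum_comm
        _ = ∑ l, (B * D⁻¹) x l * (∑ y, B y l) := by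
            exact Finset.sum_congr rfl fun l _ => (Finset.mul_sum _ _ _).symm
    have e3 : ∑ l, (B * D⁻¹) x l * (∑ y, B y l)
        = ∑ l, (B * D⁻¹) x l * (∑ j, Q ↑l j) - ∑ l, (B * D⁻¹) x l * (∑ k, D l k) := by
      rw [← Finset.sum_sub_distrib]
      exact Finset.sum_congr rfl fun l _ => by rw [hBcol l]; ring
    rw [e1, e2, e3, hBDD x]
    have := hABrow x
    linarith
  refine ⟨?_, ?_, ?_⟩
  · intro x y hxy
    rw [hentry]
    have h1 : A x y ≤ 0 := by
      rw [hA]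
      exact hoff _ _ fun e => hxy (Subtype.ext e)
    have h2 : 0 ≤ ∑ l, (B * D⁻¹) x l * B y l :=
      Finset.sum_nonneg fun l _ => mul_nonneg_of_nonpos_of_nonpos (hBD x l) (hBle y l)
    linarith
  · intro x
    rw [hrowformula x]
    have h1 : ∑ l, (B * D⁻¹) x l * (∑ j, Q ↑l j) ≤ 0 :=
      Finset.sum_nonpos fun l _ =>
        mul_nonpos_of_nonpos_of_nonneg (hBD x l) (hrow ↑l)
    have h2 := hrow (↑x : F)
    linarith
  · intro hzero x
    rw [hrowformula x, hzero ↑x]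
    simp [hzero]
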